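/- Let G be a connected graph and let P = v_1 ... v_n be a non-terminal path (all v_i have degree 2 in G, n ≥ 2), and let G' be the graph obtained by deleting v_2, ..., v_{n−1} and adding the edge v_1 v_n. Then any set A ⊆ V(G) disjoint from {v_1, ..., v_n} is a power dominating set of G if and only if it is a power dominating set of G'. -/
import Mathlib


variable {V : Type*}

/-- Closed neighborhood of a set `A`: vertices in `A` or adjacent to a vertex of `A`
(the result of the domination step). -/
def closedNbhd (G : SimpleGraph V) (A : Set V) : Set V :=
  {w | ∃ v ∈ A, w = v ∨ G.Adj v w}

/-- One zero forcing step: an observed vertex `u` with exactly one unobserved neighbor `w`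
forces `w`, enlarging the observed set `S` to `insert w S`. -/
def ForceStep (G : SimpleGraph V) (S T : Set V) : Prop :=
  ∃ u w, u ∈ S ∧ w ∉ S ∧ G.Adj u w ∧ (∀ x, G.Adj u x → x ∉ S → x = w) ∧ T = insert w S

/-- `Observes G A O` : starting from the closed neighborhood of `A`, some sequence of
zero forcing steps yields observed set `O`. -/
def Observes (G : SimpleGraph V) (A O : Set V) : Prop :=
  Relation.ReflTransGen (ForceStep G) (closedNbhd G A) O

/-- No further zero forcing step applies from `O`. -/
def Stalled (G : SimpleGraph V) (O : Set V) : Prop := ∀ T, ¬ ForceStep G O T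

/-- `A` is a power dominating set: the process observes every vertex. -/
def IsPDS (G : SimpleGraph V) (A : Set V) : Prop := Observes G A Set.univ

/-- The power domination number: minimum size of a power dominating set. -/
noncomputable def pdn (G : SimpleGraph V) [Fintype V] : ℕ :=
  sInf {n | ∃ A : Finset V, IsPDS G (↑A : Set V) ∧ A.card = n}

/-- A fort: a nonempty set such that no outside vertex has exactly one neighbor in it. -/
def IsFort (G : SimpleGraph V) (F : Set V) : Prop :=
  F.Nonempty ∧ ∀ u ∉ F, ¬ ∃! w, w ∈ F ∧ G.Adj u w

/-- A terminal fort with cut vertex `v`: a fort whose only external neighbor is `v`. -/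
def IsTerminalFort (G : SimpleGraph V) (v : V) (F : Set V) : Prop :=
  IsFort G F ∧ v ∉ F ∧ ∀ u ∉ F, (∃ w ∈ F, G.Adj u w) → u = v

/-- `v` is f-preferred with terminal fort `F`: the process with input `{v}` observes all of `F`. -/
def FPreferred (G : SimpleGraph V) (v : V) (F : Set V) : Prop :=
  IsTerminalFort G v F ∧ ∃ O, Observes G {v} O ∧ F ⊆ O

/-- `v` is p-preferred: f-preferred with a terminal fort containing another f-preferred vertex. -/
def PPreferred (G : SimpleGraph V) (v : V) : Prop :=
  ∃ F, FPreferred G v F ∧ ∃ w ∈ F, w ≠ v ∧ ∃ F', FPreferred G w F'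

lemma reach_subset {G : SimpleGraph V} {S T : Set V}
    (h : Relation.ReflTransGen (ForceStep G) S T) : S ⊆ T := by
  induction h with
  | refl => exact fun x hx => hx
  | tail _ hstep ih =>
    obtain ⟨u, w, _, _, _, _, rfl⟩ := hstep
    exact fun x hx => Set.mem_insert_iff.2 (Or.inr (ih hx))

lemma exists_stalled [Finite V] (G : SimpleGraph V) (S : Set V) :
    ∃ O, Relation.ReflTransGen (ForceStep G) S O ∧ Stalled G O := by
  generalize hk : (Set.univ \ S).ncard = k
  induction k using Nat.strong_induction_on generalizing S with
  | _ k ih =>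
    by_cases h : Stalled G S
    · exact ⟨S, Relation.ReflTransGen.refl, h⟩
    · rw [Stalled, not_forall] at h
      obtain ⟨T, hT⟩ := h
      obtain ⟨u, w, hu, hw, hadj, huniq, rfl⟩ := not_not.1 hT
      subst hk
      obtain ⟨O, h1, h2⟩ := ih (Set.univ \ insert w S).ncard
        (Set.ncard_lt_ncard
          ((Set.ssubset_iff_of_subset (Set.diff_subset_diff_right (Set.subset_insert _ _))).2
            ⟨w, ⟨Set.mem_univ w, hw⟩, fun hmem => hmem.2 (Set.mem_insert _ _)⟩)
          (Set.toFinite _))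
        (insert w S) rfl
      exact ⟨O, Relation.ReflTransGen.head ⟨u, w, hu, hw, hadj, huniq, rfl⟩ h1, h2⟩

lemma prop_path {G : SimpleGraph V} {E : Set V} (hE : Stalled G E)
    (n : ℕ) (v : ℕ → V)
    (hadj : ∀ i, i + 1 < n → G.Adj (v i) (v (i + 1)))
    (hnbr : ∀ j, 1 ≤ j → j < n - 1 → ∀ y, G.Adj (v j) y → y = v (j-1) ∨ y = v (j+1))
    (x0 : V) (hx0 : ∀ y, G.Adj (v 0) y → y = v 1 ∨ y = x0)
    (hv0 : v 0 ∈ E) (hx0E : x0 ∈ E) : ∀ j, j < n → v j ∈ E := by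
  intro j
  induction j using Nat.strong_induction_on with
  | _ j ih =>
    intro hj
    match j, hj with
    | 0, _ => exact hv0
    | 1, h1 =>
      by_contra hv1
      exact hE _ ⟨v 0, v 1, hv0, hv1, hadj 0 h1,
        fun x hx hxE => (hx0 x hx).resolve_right (fun h => hxE (h ▸ hx0E)), rfl⟩
    | (k+2), hk =>
      by_contra hvk
      have h1 : v (k+1) ∈ E := ih (k+1) (by omega) (by omega)
      have h0' : v k ∈ E := ih k (by omega) (by omega)
      refine hE _ ⟨v (k+1), v (k+2), h1, hvk, hadj (k+1) hk, ?_, rfl⟩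
      intro x hx hxE
      rcases hnbr (k+1) (by omega) (by omega) x hx with h | h
      · exact absurd (by simpa using h ▸ h0') hxE
      · simpa using h

/-- Contracting a non-terminal path $v_1 ... v_n$ (all vertices of degree 2) to the edge
$v_1 v_n$ preserves power dominating sets disjoint from the path (0-indexed below). -/
theorem stmt_4 {V : Type*} [Fintype V] (G : SimpleGraph V) [DecidableRel G.Adj]
    (hc : G.Connected) (n : ℕ) (hn : 2 ≤ n) (v : ℕ → V)
    (hinj : ∀ i j, i < n → j < n → v i = v j → i = j)
    (hadj : ∀ i, i + 1 < n → G.Adj (v i) (v (i + 1)))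
    (hdeg : ∀ i, i < n → G.degree (v i) = 2)
    (s : Set V) (hs : s = {w | ∀ i, 1 ≤ i → i < n - 1 → w ≠ v i})
    (h0 : v 0 ∈ s) (hlast : v (n - 1) ∈ s)
    (A : Set V) (hA : ∀ i, i < n → v i ∉ A) :
    IsPDS G A ↔
      IsPDS
        (SimpleGraph.fromEdgeSet
          (insert s(⟨v 0, h0⟩, ⟨v (n - 1), hlast⟩) (G.induce s).edgeSet))
        (Subtype.val ⁻¹' A) := by
  classical
  have mem_s : ∀ w, w ∈ s ↔ ∀ i, 1 ≤ i → i < n - 1 → w ≠ v i := fun w => by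
    rw [hs]; exact Iff.rfl
  -- basic structural facts
  have vint_not_s : ∀ j, 1 ≤ j → j < n - 1 → v j ∉ s := fun j h1 h2 hjs =>
    (mem_s _).1 hjs j h1 h2 rfl
  have hA_s : ∀ a ∈ A, a ∈ s := fun a ha =>
    (mem_s a).2 fun j _ h2 heq => hA j (by omega) (heq ▸ ha)
  have vcongr : ∀ {i j : ℕ}, i = j → v i = v j := fun h => congrArg v h
  -- interior neighborhoods
  have hnbr : ∀ j, 1 ≤ j → j < n - 1 → ∀ y, G.Adj (v j) y ↔ (y = v (j-1) ∨ y = v (j+1)) := by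
    intro j h1 h2 y
    have e1 : j - 1 + 1 = j := by omega
    have ha1 : G.Adj (v j) (v (j-1)) := by
      have := hadj (j-1) (by omega)
      rw [e1] at this; exact this.symm
    have ha2 : G.Adj (v j) (v (j+1)) := hadj j (by omega)
    have hne : v (j-1) ≠ v (j+1) := fun h => by
      have := hinj (j-1) (j+1) (by omega) (by omega) h; omega
    have key : G.neighborFinset (v j) = {v (j-1), v (j+1)} := by
      refine (Finset.eq_of_subset_of_card_le ?_ ?_).symm
      · intro y hy
        rcases Finset.mem_insert.1 hy with rfl | hy
        · exact (SimpleGraph.mem_neighborFinset _ _ _).2 ha1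
        · rw [Finset.mem_singleton] at hy; subst hy
          exact (SimpleGraph.mem_neighborFinset _ _ _).2 ha2
      · rw [G.card_neighborFinset_eq_degree, hdeg j (by omega)]
        rw [Finset.card_insert_of_notMem (by simpa using hne), Finset.card_singleton]
    rw [← SimpleGraph.mem_neighborFinset, key]
    simp
  -- the other neighbor of v 0
  have hv1mem : v 1 ∈ G.neighborFinset (v 0) := by
    rw [SimpleGraph.mem_neighborFinset]; exact hadj 0 (by omega)
  obtain ⟨x0, hx0e⟩ : ∃ x0, (G.neighborFinset (v 0)).erase (v 1) = {x0} := by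
    apply Finset.card_eq_one.1
    rw [Finset.card_erase_of_mem hv1mem, G.card_neighborFinset_eq_degree, hdeg 0 (by omega)]
  have hnbr0 : ∀ y, G.Adj (v 0) y ↔ (y = v 1 ∨ y = x0) := by
    intro y
    rw [← SimpleGraph.mem_neighborFinset, ← Finset.insert_erase hv1mem, hx0e]
    simp
  have hx0v1 : x0 ≠ v 1 := by
    have : x0 ∈ (G.neighborFinset (v 0)).erase (v 1) := by
      rw [hx0e]; exact Finset.mem_singleton_self x0
    exact (Finset.mem_erase.1 this).1
  have hadj0x0 : G.Adj (v 0) x0 := (hnbr0 x0).2 (Or.inr rfl)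
  -- the other neighbor of v (n-1)
  have en2 : n - 2 + 1 = n - 1 := by omega
  have hvn2mem : v (n-2) ∈ G.neighborFinset (v (n-1)) := by
    rw [SimpleGraph.mem_neighborFinset]
    have := hadj (n-2) (by omega)
    rw [en2] at this; exact this.symm
  obtain ⟨x1, hx1e⟩ : ∃ x1, (G.neighborFinset (v (n-1))).erase (v (n-2)) = {x1} := by
    apply Finset.card_eq_one.1
    rw [Finset.card_erase_of_mem hvn2mem, G.card_neighborFinset_eq_degree, hdeg (n-1) (by omega)]
  have hnbr1 : ∀ y, G.Adj (v (n-1)) y ↔ (y = v (n-2) ∨ y = x1) := by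
    intro y
    rw [← SimpleGraph.mem_neighborFinset, ← Finset.insert_erase hvn2mem, hx1e]
    simp
  have hx1vn2 : x1 ≠ v (n-2) := by
    have : x1 ∈ (G.neighborFinset (v (n-1))).erase (v (n-2)) := by
      rw [hx1e]; exact Finset.mem_singleton_self x1
    exact (Finset.mem_erase.1 this).1
  have hadj1x1 : G.Adj (v (n-1)) x1 := (hnbr1 x1).2 (Or.inr rfl)
  -- x0, x1 lie in s
  have hx0s : x0 ∈ s := by
    refine (mem_s x0).2 fun j h1 h2 heq => ?_
    have : G.Adj (v j) (v 0) := (heq ▸ hadj0x0).symm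
    rcases (hnbr j h1 h2 (v 0)).1 this with h | h
    · have := hinj 0 (j-1) (by omega) (by omega) h
      have hj1 : j = 1 := by omega
      exact hx0v1 (by rw [← hj1]; exact heq)
    · have := hinj 0 (j+1) (by omega) (by omega) h; omega
  have hx1s : x1 ∈ s := by
    refine (mem_s x1).2 fun j h1 h2 heq => ?_
    have : G.Adj (v j) (v (n-1)) := (heq ▸ hadj1x1).symm
    rcases (hnbr j h1 h2 (v (n-1))).1 this with h | h
    · have := hinj (n-1) (j-1) (by omega) (by omega) h; omega
    · have := hinj (n-1) (j+1) (by omega) (by omega) h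
      have hj1 : j = n - 2 := by omega
      exact hx1vn2 (by rw [← hj1]; exact heq)
  -- neighbors of s-vertices other than endpoints stay in s
  have hnbr_s : ∀ u, u ∈ s → u ≠ v 0 → u ≠ v (n-1) → ∀ y, G.Adj u y → y ∈ s := by
    intro u hus hu0 hu1 y hadjy
    refine (mem_s y).2 fun j hj1 hj2 heq => ?_
    have : G.Adj (v j) u := (heq ▸ hadjy).symm
    rcases (hnbr j hj1 hj2 u).1 this with h | h
    · rcases Nat.lt_or_ge 1 j with hj | hj
      · exact vint_not_s (j-1) (by omega) (by omega) (h ▸ hus)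
      · have : j = 1 := by omega
        subst this; exact hu0 (by simpa using h)
    · rcases Nat.lt_or_ge (j+1) (n-1) with hj | hj
      · exact vint_not_s (j+1) (by omega) hj (h ▸ hus)
      · have : j + 1 = n - 1 := by omega
        exact hu1 (this ▸ h)
    -- the contracted graph
  set Gc : SimpleGraph ↥s := SimpleGraph.fromEdgeSet
      (insert s(⟨v 0, h0⟩, ⟨v (n - 1), hlast⟩) (G.induce s).edgeSet) with hGc
  have hv0ne' : (⟨v 0, h0⟩ : ↥s) ≠ ⟨v (n-1), hlast⟩ := by
    intro h
    have := hinj 0 (n-1) (by omega) (by omega) (congrArg Subtype.val h)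
    omega
  have hGcadj : ∀ a b : ↥s, Gc.Adj a b ↔
      (((a : V) = v 0 ∧ (b : V) = v (n-1)) ∨ ((a : V) = v (n-1) ∧ (b : V) = v 0) ∨
        G.Adj (a : V) (b : V)) := by
    intro a b
    rw [hGc, SimpleGraph.fromEdgeSet_adj]
    constructor
    · rintro ⟨hmem, hne⟩
      rcases Set.mem_insert_iff.1 hmem with h | h
      · rcases Sym2.eq_iff.1 h with ⟨h1, h2⟩ | ⟨h1, h2⟩
        · exact Or.inl ⟨congrArg Subtype.val h1, congrArg Subtype.val h2⟩
        · exact Or.inr (Or.inl ⟨congrArg Subtype.val h1, congrArg Subtype.val h2⟩)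
      · have := (SimpleGraph.mem_edgeSet _).1 h
        exact Or.inr (Or.inr (by simpa [SimpleGraph.comap_adj] using this))
    · rintro (⟨h1, h2⟩ | ⟨h1, h2⟩ | h)
      · have ha : a = ⟨v 0, h0⟩ := Subtype.ext h1
        have hb : b = ⟨v (n-1), hlast⟩ := Subtype.ext h2
        subst ha; subst hb
        exact ⟨Set.mem_insert _ _, hv0ne'⟩
      · have ha : a = ⟨v (n-1), hlast⟩ := Subtype.ext h1
        have hb : b = ⟨v 0, h0⟩ := Subtype.ext h2
        subst ha; subst hb
        exact ⟨Set.mem_insert_iff.2 (Or.inl (Sym2.eq_swap)), hv0ne'.symm⟩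
      · refine ⟨Set.mem_insert_iff.2 (Or.inr ?_), fun he => G.irrefl (he ▸ h)⟩
        rw [SimpleGraph.mem_edgeSet]
        simpa [SimpleGraph.comap_adj] using h
  constructor
  · -- forward direction
    intro hPDS
    obtain ⟨D, hDreach, hDstall⟩ := exists_stalled Gc (closedNbhd Gc (Subtype.val ⁻¹' A))
    have hC'D : closedNbhd Gc (Subtype.val ⁻¹' A) ⊆ D := reach_subset hDreach
    have forceD : ∀ (u' w' : ↥s), u' ∈ D → Gc.Adj u' w' →
        (∀ y', Gc.Adj u' y' → y' ∉ D → y' = w') → w' ∈ D := by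
      intro u' w' hu hadj' huni
      by_contra hw
      exact hDstall _ ⟨u', w', hu, hw, hadj', huni, rfl⟩
    have main : ∀ O, Relation.ReflTransGen (ForceStep G) (closedNbhd G A) O →
        (∀ w (hw : w ∈ s), w ∈ O → (⟨w, hw⟩ : ↥s) ∈ D) ∧
        (∀ j, 1 ≤ j → j < n - 1 → v j ∈ O →
          ((x0 ∈ O ∧ ∀ k, k ≤ j → v k ∈ O) ∨ (x1 ∈ O ∧ ∀ k, j ≤ k → k < n → v k ∈ O))) := by
      intro O hO
      induction hO with
      | refl =>
        constructor
        · rintro w hw ⟨a, haA, rfl | hadj'⟩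
          · exact hC'D ⟨⟨w, hw⟩, haA, Or.inl rfl⟩
          · exact hC'D ⟨⟨a, hA_s a haA⟩, haA,
              Or.inr ((hGcadj _ _).2 (Or.inr (Or.inr hadj')))⟩
        · rintro j h1 h2 ⟨a, haA, h | h⟩
          · exact absurd (by rw [← h] at haA; exact haA) (hA j (by omega))
          · rcases ((hnbr j h1 h2 a).1 h.symm) with h' | h'
            · exact absurd (by rw [h'] at haA; exact haA) (hA (j-1) (by omega))
            · exact absurd (by rw [h'] at haA; exact haA) (hA (j+1) (by omega))
      | @tail Om Oc hpre hstep ih =>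
        obtain ⟨u, w, huO, hwO, hadjuw, huniq, rfl⟩ := hstep
        obtain ⟨obsD, intO⟩ := ih
        by_cases hwI : ∃ j, 1 ≤ j ∧ j < n - 1 ∧ w = v j
        · -- the forced vertex is an interior path vertex
          obtain ⟨j, hj1, hj2, rfl⟩ := hwI
          constructor
          · intro x hx hxO
            rcases Set.mem_insert_iff.1 hxO with rfl | hxO
            · exact absurd hx (vint_not_s j hj1 hj2)
            · exact obsD x hx hxO
          · intro j' h1' h2' hmem
            rcases Set.mem_insert_iff.1 hmem with heq | hmem
            · have hjj : j' = j := hinj j' j (by omega) (by omega) heq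
              subst hjj
              rcases (hnbr j' h1' h2' u).1 hadjuw.symm with h | h
              · subst h
                by_cases hj'1 : j' = 1
                · subst hj'1
                  have hx0O : x0 ∈ Om := by
                    by_contra hc1
                    exact hx0v1 (huniq x0 ((hnbr0 x0).2 (Or.inr rfl)) hc1)
                  refine Or.inl ⟨Set.subset_insert _ _ hx0O, fun k hk => ?_⟩
                  have hk01 : k = 0 ∨ k = 1 := by omega
                  rcases hk01 with rfl | rfl
                  · exact Set.subset_insert _ _ huO
                  · exact Set.mem_insert _ _
                · have hint := intO (j'-1) (by omega) (by omega) huO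
                  rcases hint with ⟨hx0O, hall⟩ | ⟨hx1O, hall⟩
                  · refine Or.inl ⟨Set.subset_insert _ _ hx0O, fun k hk => ?_⟩
                    rcases Nat.lt_or_ge k j' with hk' | hk'
                    · exact Set.subset_insert _ _ (hall k (by omega))
                    · have hkj : k = j' := by omega
                      subst hkj; exact Set.mem_insert _ _
                  · exact absurd (hall j' (by omega) (by omega)) hwO
              · subst h
                by_cases hj'1 : j' + 1 = n - 1
                · have hadjlast : G.Adj (v (j'+1)) x1 := by rw [hj'1]; exact hadj1x1
                  have hx1O : x1 ∈ Om := by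
                    by_contra hc1
                    have hj'2 : j' = n - 2 := by omega
                    exact hx1vn2 (by rw [← hj'2]; exact huniq x1 hadjlast hc1)
                  refine Or.inr ⟨Set.subset_insert _ _ hx1O, fun k hk hkn => ?_⟩
                  have hk01 : k = j' ∨ k = j' + 1 := by omega
                  rcases hk01 with rfl | hk2
                  · exact Set.mem_insert _ _
                  · rw [hk2]; exact Set.subset_insert _ _ huO
                · have hint := intO (j'+1) (by omega) (by omega) huO
                  rcases hint with ⟨hx0O, hall⟩ | ⟨hx1O, hall⟩
                  · exact absurd (hall j' (by omega)) hwO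
                  · refine Or.inr ⟨Set.subset_insert _ _ hx1O, fun k hk hkn => ?_⟩
                    rcases Nat.lt_or_ge j' k with hk' | hk'
                    · exact Set.subset_insert _ _ (hall k (by omega) hkn)
                    · have hkj : k = j' := by omega
                      subst hkj; exact Set.mem_insert _ _
            · rcases intO j' h1' h2' hmem with ⟨h1'', h2''⟩ | ⟨h1'', h2''⟩
              · exact Or.inl ⟨Set.subset_insert _ _ h1'',
                  fun k hk => Set.subset_insert _ _ (h2'' k hk)⟩
              · exact Or.inr ⟨Set.subset_insert _ _ h1'',
                  fun k hk hkn => Set.subset_insert _ _ (h2'' k hk hkn)⟩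
        · -- the forced vertex lies in s
          push_neg at hwI
          have hws : w ∈ s := (mem_s w).2 hwI
          have hwD : (⟨w, hws⟩ : ↥s) ∈ D := by
            by_cases huI : ∃ j, 1 ≤ j ∧ j < n - 1 ∧ u = v j
            · obtain ⟨j, hj1, hj2, rfl⟩ := huI
              rcases (hnbr j hj1 hj2 w).1 hadjuw with h | h
              · subst h
                have hj1' : j = 1 := by
                  by_contra hne
                  exact hwI (j-1) (by omega) (by omega) rfl
                subst hj1'
                have hint := intO 1 (by omega) (by omega) huO
                rcases hint with ⟨hx0O, hall⟩ | ⟨hx1O, hall⟩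
                · exact absurd (hall 0 (by omega)) hwO
                · have hvlD : (⟨v (n-1), hlast⟩ : ↥s) ∈ D :=
                    obsD _ hlast (hall (n-1) (by omega) (by omega))
                  have hx1D : (⟨x1, hx1s⟩ : ↥s) ∈ D := obsD _ hx1s hx1O
                  refine forceD _ _ hvlD
                    ((hGcadj _ _).2 (Or.inr (Or.inl ⟨rfl, vcongr (by omega)⟩))) ?_
                  intro y' hy' hy'D
                  rcases (hGcadj _ _).1 hy' with ⟨h1, h2⟩ | ⟨h1, h2⟩ | h
                  · exact absurd (hinj (n-1) 0 (by omega) (by omega) h1) (by omega)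
                  · exact Subtype.ext (h2.trans (vcongr (by omega)))
                  · rcases (hnbr1 _).1 h with h' | h'
                    · by_cases hn3 : 3 ≤ n
                      · exact absurd (h' ▸ y'.2) (vint_not_s (n-2) (by omega) (by omega))
                      · exact Subtype.ext (h'.trans (vcongr (by omega)))
                    · exact absurd
                        (by rw [show y' = (⟨x1, hx1s⟩ : ↥s) from Subtype.ext h']; exact hx1D) hy'D
              · subst h
                have hj1' : j + 1 = n - 1 := by
                  by_contra hne
                  exact hwI (j+1) (by omega) (by omega) rfl
                have hint := intO j hj1 hj2 huO
                rcases hint with ⟨hx0O, hall⟩ | ⟨hx1O, hall⟩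
                · have hv0D : (⟨v 0, h0⟩ : ↥s) ∈ D := obsD _ h0 (hall 0 (by omega))
                  have hx0D : (⟨x0, hx0s⟩ : ↥s) ∈ D := obsD _ hx0s hx0O
                  refine forceD _ _ hv0D
                    ((hGcadj _ _).2 (Or.inl ⟨rfl, vcongr (by omega)⟩)) ?_
                  intro y' hy' hy'D
                  rcases (hGcadj _ _).1 hy' with ⟨h1, h2⟩ | ⟨h1, h2⟩ | h
                  · exact Subtype.ext (h2.trans (vcongr (by omega)))
                  · exact absurd (hinj 0 (n-1) (by omega) (by omega) h1) (by omega)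
                  · rcases (hnbr0 _).1 h with h' | h'
                    · by_cases hn3 : 3 ≤ n
                      · exact absurd (h' ▸ y'.2) (vint_not_s 1 (by omega) (by omega))
                      · exact Subtype.ext (h'.trans (vcongr (by omega)))
                    · exact absurd
                        (by rw [show y' = (⟨x0, hx0s⟩ : ↥s) from Subtype.ext h']; exact hx0D) hy'D
                · exact absurd (hall (j+1) (by omega) (by omega)) hwO
            · push_neg at huI
              have hus : u ∈ s := (mem_s u).2 huI
              have huD : (⟨u, hus⟩ : ↥s) ∈ D := obsD u hus huO
              by_cases hu0 : u = v 0
              · subst hu0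
                rcases (hnbr0 w).1 hadjuw with h | h
                · subst h
                  have hn2 : n = 2 := by
                    by_contra hn3
                    exact hwI 1 (by omega) (by omega) rfl
                  have hx0O : x0 ∈ Om := by
                    by_contra hc1
                    exact hx0v1 (huniq x0 hadj0x0 hc1)
                  have hx0D : (⟨x0, hx0s⟩ : ↥s) ∈ D := obsD _ hx0s hx0O
                  refine forceD _ _ huD
                    ((hGcadj _ _).2 (Or.inl ⟨rfl, vcongr (by omega)⟩)) ?_
                  intro y' hy' hy'D
                  rcases (hGcadj _ _).1 hy' with ⟨h1, h2⟩ | ⟨h1, h2⟩ | h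
                  · exact Subtype.ext (h2.trans (vcongr (by omega)))
                  · exact absurd (hinj 0 (n-1) (by omega) (by omega) h1) (by omega)
                  · rcases (hnbr0 _).1 h with h' | h'
                    · exact Subtype.ext h'
                    · exact absurd
                        (by rw [show y' = (⟨x0, hx0s⟩ : ↥s) from Subtype.ext h']; exact hx0D) hy'D
                · subst h
                  have hv1O : v 1 ∈ Om := by
                    by_contra hc1
                    exact hx0v1 (huniq (v 1) (hadj 0 (by omega)) hc1).symm
                  have hvlD : (⟨v (n-1), hlast⟩ : ↥s) ∈ D := by
                    by_cases hn3 : 3 ≤ n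
                    · have hint := intO 1 (by omega) (by omega) hv1O
                      rcases hint with ⟨hx0O, _⟩ | ⟨_, hall⟩
                      · exact absurd hx0O hwO
                      · exact obsD _ hlast (hall (n-1) (by omega) (by omega))
                    · exact obsD _ hlast (by rw [show n - 1 = 1 by omega]; exact hv1O)
                  refine forceD _ _ huD ((hGcadj _ _).2 (Or.inr (Or.inr hadj0x0))) ?_
                  intro y' hy' hy'D
                  rcases (hGcadj _ _).1 hy' with ⟨h1, h2⟩ | ⟨h1, h2⟩ | h
                  · exact absurd
                      (by rw [show y' = (⟨v (n-1), hlast⟩ : ↥s) from Subtype.ext h2]; exact hvlD)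
                      hy'D
                  · exact absurd (hinj 0 (n-1) (by omega) (by omega) h1) (by omega)
                  · rcases (hnbr0 _).1 h with h' | h'
                    · by_cases hn3 : 3 ≤ n
                      · exact absurd (h' ▸ y'.2) (vint_not_s 1 (by omega) (by omega))
                      · exact absurd
                          (by rw [show y' = (⟨v (n-1), hlast⟩ : ↥s) from
                              Subtype.ext (h'.trans (vcongr (by omega)))]; exact hvlD) hy'D
                    · exact Subtype.ext h'
              · by_cases hu1 : u = v (n-1)
                · subst hu1
                  rcases (hnbr1 w).1 hadjuw with h | h
                  · subst h
                    have hn2 : n = 2 := by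
                      by_contra hn3
                      exact hwI (n-2) (by omega) (by omega) rfl
                    have hx1O : x1 ∈ Om := by
                      by_contra hc1
                      exact hx1vn2 (huniq x1 hadj1x1 hc1)
                    have hx1D : (⟨x1, hx1s⟩ : ↥s) ∈ D := obsD _ hx1s hx1O
                    refine forceD _ _ huD
                      ((hGcadj _ _).2 (Or.inr (Or.inl ⟨rfl, vcongr (by omega)⟩))) ?_
                    intro y' hy' hy'D
                    rcases (hGcadj _ _).1 hy' with ⟨h1, h2⟩ | ⟨h1, h2⟩ | h
                    · exact absurd (hinj (n-1) 0 (by omega) (by omega) h1) (by omega)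
                    · exact Subtype.ext (h2.trans (vcongr (by omega)))
                    · rcases (hnbr1 _).1 h with h' | h'
                      · exact Subtype.ext (h'.trans (vcongr (by omega)))
                      · exact absurd
                          (by rw [show y' = (⟨x1, hx1s⟩ : ↥s) from Subtype.ext h']; exact hx1D) hy'D
                  · subst h
                    have hvn2O : v (n-2) ∈ Om := by
                      by_contra hc1
                      have hadj' : G.Adj (v (n-1)) (v (n-2)) := (hnbr1 _).2 (Or.inl rfl)
                      exact hx1vn2 (huniq (v (n-2)) hadj' hc1).symm
                    have hv0D : (⟨v 0, h0⟩ : ↥s) ∈ D := by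
                      by_cases hn3 : 3 ≤ n
                      · have hint := intO (n-2) (by omega) (by omega) hvn2O
                        rcases hint with ⟨_, hall⟩ | ⟨hx1O, _⟩
                        · exact obsD _ h0 (hall 0 (by omega))
                        · exact absurd hx1O hwO
                      · exact obsD _ h0 (by rw [show n - 2 = 0 by omega] at hvn2O; exact hvn2O)
                    refine forceD _ _ huD ((hGcadj _ _).2 (Or.inr (Or.inr hadj1x1))) ?_
                    intro y' hy' hy'D
                    rcases (hGcadj _ _).1 hy' with ⟨h1, h2⟩ | ⟨h1, h2⟩ | h
                    · exact absurd (hinj (n-1) 0 (by omega) (by omega) h1) (by omega)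
                    · exact absurd
                        (by rw [show y' = (⟨v 0, h0⟩ : ↥s) from Subtype.ext h2]; exact hv0D) hy'D
                    · rcases (hnbr1 _).1 h with h' | h'
                      · by_cases hn3 : 3 ≤ n
                        · exact absurd (h' ▸ y'.2) (vint_not_s (n-2) (by omega) (by omega))
                        · exact absurd
                            (by rw [show y' = (⟨v 0, h0⟩ : ↥s) from
                                Subtype.ext (h'.trans (vcongr (by omega)))]; exact hv0D) hy'D
                      · exact Subtype.ext h'
                · refine forceD _ _ huD ((hGcadj _ _).2 (Or.inr (Or.inr hadjuw))) ?_
                  intro y' hy' hy'D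
                  rcases (hGcadj _ _).1 hy' with ⟨h1, h2⟩ | ⟨h1, h2⟩ | h
                  · exact absurd h1 hu0
                  · exact absurd h1 hu1
                  · by_cases hyO : (y' : V) ∈ Om
                    · exact absurd (obsD _ y'.2 hyO) hy'D
                    · exact Subtype.ext (huniq _ h hyO)
          refine ⟨?_, ?_⟩
          · intro x hx hxO
            rcases Set.mem_insert_iff.1 hxO with rfl | hxO
            · exact hwD
            · exact obsD x hx hxO
          · intro j' h1' h2' hmem
            rcases Set.mem_insert_iff.1 hmem with heq | hmem
            · exact absurd heq.symm (hwI j' h1' h2')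
            · rcases intO j' h1' h2' hmem with ⟨h1'', h2''⟩ | ⟨h1'', h2''⟩
              · exact Or.inl ⟨Set.subset_insert _ _ h1'',
                  fun k hk => Set.subset_insert _ _ (h2'' k hk)⟩
              · exact Or.inr ⟨Set.subset_insert _ _ h1'',
                  fun k hk hkn => Set.subset_insert _ _ (h2'' k hk hkn)⟩
    have hfin := (main Set.univ hPDS).1
    have hDuniv : D = Set.univ :=
      Set.eq_univ_of_forall fun x' => hfin x'.1 x'.2 (Set.mem_univ _)
    rw [hDuniv] at hDreach
    exact hDreach
  · -- backward direction
    intro hPDS'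
    obtain ⟨E, hEreach, hEstall⟩ := exists_stalled G (closedNbhd G A)
    have hCE : closedNbhd G A ⊆ E := reach_subset hEreach
    have forceE : ∀ (u w : V), u ∈ E → G.Adj u w →
        (∀ y, G.Adj u y → y ∉ E → y = w) → w ∈ E := by
      intro u w hu hadj' huni
      by_contra hw
      exact hEstall _ ⟨u, w, hu, hw, hadj', huni, rfl⟩
    have propL : v 0 ∈ E → x0 ∈ E → ∀ j, j < n → v j ∈ E :=
      fun h1 h2 => prop_path hEstall n v hadj
        (fun j hj1 hj2 y hy => (hnbr j hj1 hj2 y).1 hy) x0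
        (fun y hy => (hnbr0 y).1 hy) h1 h2
    have propR : v (n-1) ∈ E → x1 ∈ E → ∀ j, j < n → v j ∈ E := by
      intro h1 h2 j hj
      have key := prop_path hEstall n (fun i => v (n-1-i)) ?_ ?_ x1 ?_ h1 h2 (n-1-j) (by omega)
      · have e : n-1-(n-1-j) = j := by omega
        have key' : v (n-1-(n-1-j)) ∈ E := key
        rw [e] at key'
        exact key'
      · intro i hi
        have e : n-1-(i+1)+1 = n-1-i := by omega
        have h' := hadj (n-1-(i+1)) (by omega)
        rw [e] at h'
        exact h'.symm
      · intro j' hj1 hj2 y hy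
        rcases (hnbr (n-1-j') (by omega) (by omega) y).1 hy with h | h
        · right; rw [h]; exact vcongr (by omega)
        · left; rw [h]; exact vcongr (by omega)
      · intro y hy
        have hy' : G.Adj (v (n-1)) y := hy
        rcases (hnbr1 y).1 hy' with h | h
        · left; rw [h]; exact vcongr (by omega)
        · right; exact h
    have main : ∀ O', Relation.ReflTransGen (ForceStep Gc)
        (closedNbhd Gc (Subtype.val ⁻¹' A)) O' →
        (∀ x' : ↥s, x' ∈ O' → (x' : V) ∈ E) ∧
        ((⟨v 0, h0⟩ : ↥s) ∈ O' → x0 ∈ E ∨ (x1 ∈ E ∧ v (n-1) ∈ E)) ∧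
        ((⟨v (n-1), hlast⟩ : ↥s) ∈ O' → x1 ∈ E ∨ (x0 ∈ E ∧ v 0 ∈ E)) := by
      intro O' hO'
      induction hO' with
      | refl =>
        refine ⟨?_, ?_, ?_⟩
        · rintro x' ⟨a', ha'A, rfl | hadj'⟩
          · exact hCE ⟨(x' : V), ha'A, Or.inl rfl⟩
          · have hA' : (a' : V) ∈ A := ha'A
            rcases (hGcadj _ _).1 hadj' with ⟨h1, _⟩ | ⟨h1, _⟩ | h
            · rw [h1] at hA'
              exact absurd hA' (hA 0 (by omega))
            · rw [h1] at hA'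
              exact absurd hA' (hA (n-1) (by omega))
            · exact hCE ⟨(a' : V), ha'A, Or.inr h⟩
        · rintro ⟨a', ha'A, heq | hadj'⟩
          · have hA' : (a' : V) ∈ A := ha'A
            rw [← congrArg Subtype.val heq] at hA'
            exact absurd hA' (hA 0 (by omega))
          · have hA' : (a' : V) ∈ A := ha'A
            rcases (hGcadj _ _).1 hadj' with ⟨h1, h2⟩ | ⟨h1, h2⟩ | h
            · exact absurd (hinj 0 (n-1) (by omega) (by omega) h2) (by omega)
            · rw [h1] at hA'
              exact absurd hA' (hA (n-1) (by omega))
            · rcases (hnbr0 _).1 h.symm with h' | h'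
              · rw [h'] at hA'
                exact absurd hA' (hA 1 (by omega))
              · exact Or.inl (hCE ⟨(a' : V), ha'A, Or.inl h'.symm⟩)
        · rintro ⟨a', ha'A, heq | hadj'⟩
          · have hA' : (a' : V) ∈ A := ha'A
            rw [← congrArg Subtype.val heq] at hA'
            exact absurd hA' (hA (n-1) (by omega))
          · have hA' : (a' : V) ∈ A := ha'A
            rcases (hGcadj _ _).1 hadj' with ⟨h1, h2⟩ | ⟨h1, h2⟩ | h
            · rw [h1] at hA'
              exact absurd hA' (hA 0 (by omega))
            · exact absurd (hinj (n-1) 0 (by omega) (by omega) h2) (by omega)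
            · rcases (hnbr1 _).1 h.symm with h' | h'
              · rw [h'] at hA'
                exact absurd hA' (hA (n-2) (by omega))
              · exact Or.inl (hCE ⟨(a' : V), ha'A, Or.inl h'.symm⟩)
      | @tail Om Oc hpre hstep ih =>
        obtain ⟨u', w', hu'O, hw'O, hadjuw', huniq', rfl⟩ := hstep
        obtain ⟨iha, ih0, ih1⟩ := ih
        have hu'E : (u' : V) ∈ E := iha u' hu'O
        have key : ((w' : V) ∈ E) ∧
            ((w' : V) = v 0 → x0 ∈ E ∨ (x1 ∈ E ∧ v (n-1) ∈ E)) ∧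
            ((w' : V) = v (n-1) → x1 ∈ E ∨ (x0 ∈ E ∧ v 0 ∈ E)) := by
          by_cases hu'0 : u' = (⟨v 0, h0⟩ : ↥s)
          · subst hu'0
            have hw'cases : (w' : V) = v (n-1) ∨ (w' : V) = x0 := by
              rcases (hGcadj _ _).1 hadjuw' with ⟨_, h2⟩ | ⟨h1, _⟩ | h
              · exact Or.inl h2
              · exact absurd (hinj 0 (n-1) (by omega) (by omega) h1) (by omega)
              · rcases (hnbr0 _).1 h with h' | h'
                · by_cases hn3 : 3 ≤ n
                  · exact absurd (h' ▸ w'.2) (vint_not_s 1 (by omega) (by omega))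
                  · exact Or.inl (h'.trans (vcongr (by omega)))
                · exact Or.inr h'
            rcases hw'cases with hwvl | hwx0
            · have hx0cases : x0 ∈ E ∨ x0 = v (n-1) := by
                by_cases hx0O : (⟨x0, hx0s⟩ : ↥s) ∈ Om
                · exact Or.inl (iha _ hx0O)
                · have heq := huniq' ⟨x0, hx0s⟩
                    ((hGcadj _ _).2 (Or.inr (Or.inr hadj0x0))) hx0O
                  exact Or.inr ((congrArg Subtype.val heq).trans hwvl)
              have hvlE : v (n-1) ∈ E := by
                rcases hx0cases with hx0E | hx0vl
                · exact propL hu'E hx0E (n-1) (by omega)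
                · rcases ih0 hu'O with hx0E | ⟨_, hvlE⟩
                  · rw [← hx0vl]; exact hx0E
                  · exact hvlE
              refine ⟨by rw [hwvl]; exact hvlE, ?_, ?_⟩
              · intro h0'
                exact absurd (hinj 0 (n-1) (by omega) (by omega) (h0'.symm.trans hwvl)) (by omega)
              · intro _
                rcases hx0cases with hx0E | hx0vl
                · exact Or.inr ⟨hx0E, hu'E⟩
                · rcases ih0 hu'O with hx0E | ⟨hx1E, _⟩
                  · exact Or.inr ⟨hx0E, hu'E⟩
                  · exact Or.inl hx1E
            · have hx0E : x0 ∈ E := by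
                by_cases hvlO : (⟨v (n-1), hlast⟩ : ↥s) ∈ Om
                · rcases ih1 hvlO with hx1E | ⟨hx0E, _⟩
                  · have hallE := propR (iha _ hvlO) hx1E
                    refine forceE (v 0) x0 (hallE 0 (by omega)) hadj0x0 ?_
                    intro y hy hyE
                    rcases (hnbr0 y).1 hy with h' | h'
                    · exact absurd (by rw [h']; exact hallE 1 (by omega)) hyE
                    · exact h'
                  · exact hx0E
                · have heq := huniq' ⟨v (n-1), hlast⟩
                    ((hGcadj _ _).2 (Or.inl ⟨rfl, rfl⟩)) hvlO
                  have hx0vl : v (n-1) = x0 := (congrArg Subtype.val heq).trans hwx0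
                  rcases ih0 hu'O with hx0E | ⟨_, hvlE⟩
                  · exact hx0E
                  · rw [← hx0vl]; exact hvlE
              exact ⟨by rw [hwx0]; exact hx0E, fun _ => Or.inl hx0E,
                fun _ => Or.inr ⟨hx0E, hu'E⟩⟩
          · by_cases hu'1 : u' = (⟨v (n-1), hlast⟩ : ↥s)
            · subst hu'1
              have hw'cases : (w' : V) = v 0 ∨ (w' : V) = x1 := by
                rcases (hGcadj _ _).1 hadjuw' with ⟨h1, _⟩ | ⟨_, h2⟩ | h
                · exact absurd (hinj (n-1) 0 (by omega) (by omega) h1) (by omega)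
                · exact Or.inl h2
                · rcases (hnbr1 _).1 h with h' | h'
                  · by_cases hn3 : 3 ≤ n
                    · exact absurd (h' ▸ w'.2) (vint_not_s (n-2) (by omega) (by omega))
                    · exact Or.inl (h'.trans (vcongr (by omega)))
                  · exact Or.inr h'
              rcases hw'cases with hwv0 | hwx1
              · have hx1cases : x1 ∈ E ∨ x1 = v 0 := by
                  by_cases hx1O : (⟨x1, hx1s⟩ : ↥s) ∈ Om
                  · exact Or.inl (iha _ hx1O)
                  · have heq := huniq' ⟨x1, hx1s⟩
                      ((hGcadj _ _).2 (Or.inr (Or.inr hadj1x1))) hx1O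
                    exact Or.inr ((congrArg Subtype.val heq).trans hwv0)
                have hv0E : v 0 ∈ E := by
                  rcases hx1cases with hx1E | hx1v0
                  · exact propR hu'E hx1E 0 (by omega)
                  · rcases ih1 hu'O with hx1E | ⟨_, hv0E⟩
                    · rw [← hx1v0]; exact hx1E
                    · exact hv0E
                refine ⟨by rw [hwv0]; exact hv0E, ?_, ?_⟩
                · intro _
                  rcases hx1cases with hx1E | hx1v0
                  · exact Or.inr ⟨hx1E, hu'E⟩
                  · rcases ih1 hu'O with hx1E | ⟨hx0E, _⟩
                    · exact Or.inr ⟨hx1E, hu'E⟩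
                    · exact Or.inl hx0E
                · intro h1'
                  exact absurd (hinj (n-1) 0 (by omega) (by omega) (h1'.symm.trans hwv0)) (by omega)
              · have hx1E : x1 ∈ E := by
                  by_cases hv0O : (⟨v 0, h0⟩ : ↥s) ∈ Om
                  · rcases ih0 hv0O with hx0E | ⟨hx1E, _⟩
                    · have hallE := propL (iha _ hv0O) hx0E
                      refine forceE (v (n-1)) x1 (hallE (n-1) (by omega)) hadj1x1 ?_
                      intro y hy hyE
                      rcases (hnbr1 y).1 hy with h' | h'
                      · exact absurd (by rw [h']; exact hallE (n-2) (by omega)) hyE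
                      · exact h'
                    · exact hx1E
                  · have heq := huniq' ⟨v 0, h0⟩
                      ((hGcadj _ _).2 (Or.inr (Or.inl ⟨rfl, rfl⟩))) hv0O
                    have hv0x1 : v 0 = x1 := (congrArg Subtype.val heq).trans hwx1
                    rcases ih1 hu'O with hx1E | ⟨_, hv0E⟩
                    · exact hx1E
                    · rw [← hv0x1]; exact hv0E
                exact ⟨by rw [hwx1]; exact hx1E, fun _ => Or.inr ⟨hx1E, hu'E⟩,
                  fun _ => Or.inl hx1E⟩
            · have hGadj : G.Adj (u' : V) (w' : V) := by
                rcases (hGcadj _ _).1 hadjuw' with ⟨h1, _⟩ | ⟨h1, _⟩ | h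
                · exact absurd (Subtype.ext h1) hu'0
                · exact absurd (Subtype.ext h1) hu'1
                · exact h
              have hwE : (w' : V) ∈ E := by
                refine forceE _ _ hu'E hGadj ?_
                intro y hy hyE
                have hys : y ∈ s := hnbr_s (u' : V) u'.2
                  (fun h => hu'0 (Subtype.ext h)) (fun h => hu'1 (Subtype.ext h)) y hy
                have hyO : (⟨y, hys⟩ : ↥s) ∉ Om := fun hcx => hyE (iha _ hcx)
                exact congrArg Subtype.val
                  (huniq' ⟨y, hys⟩ ((hGcadj _ _).2 (Or.inr (Or.inr hy))) hyO)
              refine ⟨hwE, ?_, ?_⟩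
              · intro h0'
                have hux0 : (u' : V) = x0 := by
                  rcases (hnbr0 (u' : V)).1 (by rw [← h0']; exact hGadj.symm) with h' | h'
                  · by_cases hn3 : 3 ≤ n
                    · exact absurd (h' ▸ u'.2) (vint_not_s 1 (by omega) (by omega))
                    · exact absurd (Subtype.ext (h'.trans (vcongr (by omega)))) hu'1
                  · exact h'
                exact Or.inl (hux0 ▸ hu'E)
              · intro h1'
                have hux1 : (u' : V) = x1 := by
                  rcases (hnbr1 (u' : V)).1 (by rw [← h1']; exact hGadj.symm) with h' | h'
                  · by_cases hn3 : 3 ≤ n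
                    · exact absurd (h' ▸ u'.2) (vint_not_s (n-2) (by omega) (by omega))
                    · exact absurd (Subtype.ext (h'.trans (vcongr (by omega)))) hu'0
                  · exact h'
                exact Or.inl (hux1 ▸ hu'E)
        refine ⟨?_, ?_, ?_⟩
        · intro x' hx'
          rcases Set.mem_insert_iff.1 hx' with rfl | hx'
          · exact key.1
          · exact iha x' hx'
        · intro hmem
          rcases Set.mem_insert_iff.1 hmem with heq | hmem
          · exact key.2.1 (congrArg Subtype.val heq).symm
          · exact ih0 hmem
        · intro hmem
          rcases Set.mem_insert_iff.1 hmem with heq | hmem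
          · exact key.2.2 (congrArg Subtype.val heq).symm
          · exact ih1 hmem
    obtain ⟨obsE, -, -⟩ := main Set.univ hPDS'
    have hsE : ∀ w, w ∈ s → w ∈ E := fun w hw => obsE ⟨w, hw⟩ (Set.mem_univ _)
    have hall := propL (hsE _ h0) (hsE _ hx0s)
    have hEuniv : E = Set.univ := by
      refine Set.eq_univ_of_forall ?_
      intro x
      by_cases hx : x ∈ s
      · exact hsE x hx
      · rw [mem_s] at hx
        push_neg at hx
        obtain ⟨j, hj1, hj2, rfl⟩ := hx
        exact hall j (by omega)
    rw [hEuniv] at hEreach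
    exact hEreach
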